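/- arXiv:2408.00036 — 2 statements merged into one kernel-verified Lean document; each statement's English description precedes it below -/
import Mathlib

section
/- Let α > 0 and C > 0 be real numbers, let x = (x₁,x₂) ∈ ℝ² with x ≠ 0, and let λ < 0 with x₁ > λ. Let D₁, D₂ be real numbers with D₂ > 0, D₁ − D₂ ≥ C·(x₁ − λ), C·(x₁ − λ) ≤ D₂, and C·|x|² ≥ 8α·|λ|·D₂. Then 2α·log|x| + log D₁ ≥ 2α·log|x_λ| + log D₂, where x_λ = (2λ − x₁, x₂) and |·| is the Euclidean norm. -/
lemma log_one_add_ge_half (t : ℝ) (h0 : 0 ≤ t) (h1 : t ≤ 1) :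
    t / 2 ≤ Real.log (1 + t) := by
  have h : Real.exp (t / 2) ≤ 1 + t := by
    have hneg := Real.add_one_le_exp (-(t / 2))
    have hE : Real.exp (-(t / 2)) = (Real.exp (t / 2))⁻¹ := Real.exp_neg _
    have hpos : 0 < Real.exp (t / 2) := Real.exp_pos _
    have hmul : Real.exp (t / 2) * (1 - t / 2) ≤ 1 := by
      rw [hE] at hneg
      have := mul_le_mul_of_nonneg_left hneg hpos.le
      rw [mul_inv_cancel₀ (ne_of_gt hpos)] at this
      nlinarith
    nlinarith
  calc t / 2 = Real.log (Real.exp (t / 2)) := (Real.log_exp _).symm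
    _ ≤ Real.log (1 + t) := Real.log_le_log (Real.exp_pos _) h

/-- Let `α > 0` and `C > 0`, `x = (x₁, x₂) ∈ ℝ²` with `x ≠ 0`, `λ < 0` with
`x₁ > λ`. Let `D₁, D₂` satisfy `D₂ > 0`, `D₁ − D₂ ≥ C(x₁ − λ)`,
`C(x₁ − λ) ≤ D₂` and `C|x|² ≥ 8α|λ|D₂`. Then
`2α·log|x| + log D₁ ≥ 2α·log|x_λ| + log D₂`, where `x_λ = (2λ − x₁, x₂)` and
`|·|` is the Euclidean norm. -/
theorem key_inequality_log (α C x₁ x₂ lam D₁ D₂ : ℝ) (hα : 0 < α) (hC : 0 < C)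
    (hx : (x₁, x₂) ≠ (0, 0)) (hlam : lam < 0) (hx₁ : x₁ > lam)
    (hD₂ : 0 < D₂) (hdiff : D₁ - D₂ ≥ C * (x₁ - lam))
    (hsmall : C * (x₁ - lam) ≤ D₂)
    (hbig : C * Real.sqrt (x₁ ^ 2 + x₂ ^ 2) ^ 2 ≥ 8 * α * |lam| * D₂) :
    2 * α * Real.log (Real.sqrt (x₁ ^ 2 + x₂ ^ 2)) + Real.log D₁
      ≥ 2 * α * Real.log (Real.sqrt ((2 * lam - x₁) ^ 2 + x₂ ^ 2)) + Real.log D₂ := by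
  set r2 := x₁ ^ 2 + x₂ ^ 2 with hr2def
  set s2 := (2 * lam - x₁) ^ 2 + x₂ ^ 2 with hs2def
  have hne : x₁ ≠ 0 ∨ x₂ ≠ 0 := by
    by_contra h
    push_neg at h
    exact hx (by simp [h.1, h.2])
  have hr2 : 0 < r2 := by
    rcases hne with h | h <;> positivity
  have hxl : 0 < x₁ - lam := by linarith
  have habs : |lam| = -lam := abs_of_neg hlam
  have hdel : s2 - r2 = 4 * (-lam) * (x₁ - lam) := by
    rw [hs2def, hr2def]; ring
  have hs2 : 0 < s2 := by nlinarith
  have hD₁ : 0 < D₁ := by nlinarith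
  rw [Real.log_sqrt hr2.le, Real.log_sqrt hs2.le]
  have hbig' : 8 * α * (-lam) * D₂ ≤ C * r2 := by
    rw [Real.sq_sqrt hr2.le, habs] at hbig
    linarith
  have hlog1 : Real.log s2 - Real.log r2 ≤ (s2 - r2) / r2 := by
    have h := Real.log_le_sub_one_of_pos (show 0 < s2 / r2 by positivity)
    rw [Real.log_div (ne_of_gt hs2) (ne_of_gt hr2)] at h
    have heq : s2 / r2 - 1 = (s2 - r2) / r2 := by field_simp
    linarith [heq ▸ h]
  set t := C * (x₁ - lam) / D₂ with htdef
  have ht0 : 0 ≤ t := by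
    rw [htdef]
    positivity
  have ht1 : t ≤ 1 := by
    rw [htdef, div_le_one hD₂]; exact hsmall
  have hlog2 : t / 2 ≤ Real.log D₁ - Real.log D₂ := by
    have h1 : D₂ * (1 + t) ≤ D₁ := by
      rw [htdef]
      field_simp
      linarith
    have h2 : Real.log (D₂ * (1 + t)) ≤ Real.log D₁ :=
      Real.log_le_log (by positivity) h1
    rw [Real.log_mul (ne_of_gt hD₂) (by positivity)] at h2
    have := log_one_add_ge_half t ht0 ht1
    linarith
  have hkey : α * ((s2 - r2) / r2) ≤ t / 2 := by
    have h : (α * (4 * (-lam) * (x₁ - lam))) / r2 ≤ (C * (x₁ - lam)) / (2 * D₂) := by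
      rw [div_le_div_iff₀ hr2 (by positivity)]
      nlinarith [mul_le_mul_of_nonneg_left hbig' hxl.le]
    calc α * ((s2 - r2) / r2) = (α * (4 * (-lam) * (x₁ - lam))) / r2 := by
          rw [hdel]; ring
      _ ≤ (C * (x₁ - lam)) / (2 * D₂) := h
      _ = t / 2 := by rw [htdef]; ring
  have hα' : α * (Real.log s2 - Real.log r2) ≤ α * ((s2 - r2) / r2) :=
    mul_le_mul_of_nonneg_left hlog1 hα.le
  nlinarith [hlog2, hkey, hα']
end

section
/- Let α > 0 and C > 0 be real numbers, let x = (x₁,x₂) ∈ ℝ² with x ≠ 0, and let λ < 0 with x₁ > λ. Let D₁, D₂ be real numbers with D₂ > 0, D₁ − D₂ ≥ C·(x₁ − λ), C·(x₁ − λ) ≤ D₂, and C·|x|² ≥ 8α·|λ|·D₂. Then |x|^{2α}·D₁ ≥ |x_λ|^{2α}·D₂; equivalently, |x|^{2α}·(−D₁) ≤ |x_λ|^{2α}·(−D₂), where x_λ = (2λ − x₁, x₂), |·| is the Euclidean norm, and powers are real powers. -/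
set_option maxHeartbeats 800000 in
/-- Let `α > 0` and `C > 0`, `x = (x₁, x₂) ∈ ℝ²` with `x ≠ 0`, `λ < 0` with
`x₁ > λ`. Let `D₁, D₂` satisfy `D₂ > 0`, `D₁ − D₂ ≥ C(x₁ − λ)`,
`C(x₁ − λ) ≤ D₂` and `C|x|² ≥ 8α|λ|D₂`. Then `|x|^(2α)·D₁ ≥ |x_λ|^(2α)·D₂`;
equivalently `|x|^(2α)·(−D₁) ≤ |x_λ|^(2α)·(−D₂)`, where `x_λ = (2λ − x₁, x₂)`,
`|·|` is the Euclidean norm, and powers are real powers. -/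
theorem key_inequality_mul (α C x₁ x₂ lam D₁ D₂ : ℝ) (hα : 0 < α) (hC : 0 < C)
    (hx : (x₁, x₂) ≠ (0, 0)) (hlam : lam < 0) (hx₁ : x₁ > lam)
    (hD₂ : 0 < D₂) (hdiff : D₁ - D₂ ≥ C * (x₁ - lam))
    (hsmall : C * (x₁ - lam) ≤ D₂)
    (hbig : C * Real.sqrt (x₁ ^ 2 + x₂ ^ 2) ^ 2 ≥ 8 * α * |lam| * D₂) :
    Real.sqrt (x₁ ^ 2 + x₂ ^ 2) ^ (2 * α) * D₁
        ≥ Real.sqrt ((2 * lam - x₁) ^ 2 + x₂ ^ 2) ^ (2 * α) * D₂ ∧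
      Real.sqrt (x₁ ^ 2 + x₂ ^ 2) ^ (2 * α) * (-D₁)
        ≤ Real.sqrt ((2 * lam - x₁) ^ 2 + x₂ ^ 2) ^ (2 * α) * (-D₂) := by
  set r2 : ℝ := x₁ ^ 2 + x₂ ^ 2 with hr2def
  set s2 : ℝ := (2 * lam - x₁) ^ 2 + x₂ ^ 2 with hs2def
  clear_value r2 s2
  have hxne : x₁ ≠ 0 ∨ x₂ ≠ 0 := by
    by_contra h
    push_neg at h
    exact hx (by simp [h.1, h.2])
  have hr2 : 0 < r2 := by
    rcases hxne with h | h
    · have : 0 < x₁ ^ 2 := by positivity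
      nlinarith [sq_nonneg x₂]
    · have : 0 < x₂ ^ 2 := by positivity
      nlinarith [sq_nonneg x₁]
  have ht : 0 < x₁ - lam := by linarith
  have hl : |lam| = -lam := abs_of_neg hlam
  have hs2eq : s2 = r2 + 4 * (-lam) * (x₁ - lam) := by
    simp only [hr2def, hs2def]; ring
  have hs2 : 0 < s2 := by nlinarith
  have hbig' : C * r2 ≥ 8 * α * (-lam) * D₂ := by
    rw [Real.sq_sqrt hr2.le] at hbig
    rw [hl] at hbig
    exact hbig
  set u : ℝ := 4 * (-lam) * (x₁ - lam) / r2 with hudef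
  clear_value u
  have hu0 : 0 ≤ u := by
    rw [hudef]
    exact div_nonneg (by nlinarith) hr2.le
  have hur2 : u * r2 = 4 * (-lam) * (x₁ - lam) := by
    rw [hudef, div_mul_cancel₀ _ hr2.ne']
  have hyle : 2 * α * u * D₂ ≤ C * (x₁ - lam) := by
    rw [ge_iff_le, ← sub_nonneg] at hbig'
    have key : (C * (x₁ - lam) - 2 * α * u * D₂) * r2 =
        (x₁ - lam) * (C * r2 - 8 * α * (-lam) * D₂) := by
      linear_combination (-2 * α * D₂) * hur2
    nlinarith [mul_nonneg ht.le hbig', key, hr2]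
  have hy2 : α * u ≤ 1 / 2 := by
    nlinarith
  have hy0 : 0 ≤ α * u := mul_nonneg hα.le hu0
  -- (1+u)^α ≤ 1 + 2αu
  have h1u : (1 + u) ^ α ≤ 1 + 2 * (α * u) := by
    have h1upos : (0:ℝ) < 1 + u := by linarith
    have heq : (1 + u) ^ α = Real.exp (α * Real.log (1 + u)) := by
      rw [Real.rpow_def_of_pos h1upos, mul_comm]
    have hlog : Real.log (1 + u) ≤ u := by
      have := Real.log_le_sub_one_of_pos h1upos
      linarith
    have hstep1 : (1 + u) ^ α ≤ Real.exp (α * u) := by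
      rw [heq]
      exact Real.exp_le_exp.mpr (mul_le_mul_of_nonneg_left hlog hα.le)
    have hA : (1 - α * u) * Real.exp (α * u) ≤ 1 := by
      have h := Real.add_one_le_exp (-(α * u))
      rw [Real.exp_neg] at h
      have hep : 0 < Real.exp (α * u) := Real.exp_pos _
      have := mul_le_mul_of_nonneg_right h hep.le
      rw [inv_mul_cancel₀ hep.ne'] at this
      linarith [this]
    have hep : 0 < Real.exp (α * u) := Real.exp_pos _
    nlinarith [hA, hy2, hy0, hep]
  have hs2u : s2 = r2 * (1 + u) := by
    rw [hs2eq, ← hur2]; ring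
  have hr2α : 0 < r2 ^ α := Real.rpow_pos_of_pos hr2 α
  have hsplit : s2 ^ α = r2 ^ α * (1 + u) ^ α := by
    rw [hs2u, Real.mul_rpow hr2.le (by linarith : (0:ℝ) ≤ 1 + u)]
  have hmain : r2 ^ α * D₁ ≥ s2 ^ α * D₂ := by
    rw [hsplit]
    have hD₁ : D₁ ≥ D₂ + C * (x₁ - lam) := by linarith
    have h1 : (1 + u) ^ α * D₂ ≤ (1 + 2 * (α * u)) * D₂ :=
      mul_le_mul_of_nonneg_right h1u hD₂.le
    have h2 : (1 + 2 * (α * u)) * D₂ ≤ D₁ := by nlinarith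
    have h3 : (1 + u) ^ α * D₂ ≤ D₁ := le_trans h1 h2
    calc r2 ^ α * (1 + u) ^ α * D₂ = r2 ^ α * ((1 + u) ^ α * D₂) := by ring
      _ ≤ r2 ^ α * D₁ := mul_le_mul_of_nonneg_left h3 hr2α.le
  have hrs : Real.sqrt r2 ^ (2 * α) = r2 ^ α := by
    rw [Real.sqrt_eq_rpow, ← Real.rpow_mul hr2.le,
      show (1:ℝ)/2*(2*α) = α by ring]
  have hss : Real.sqrt s2 ^ (2 * α) = s2 ^ α := by
    rw [Real.sqrt_eq_rpow, ← Real.rpow_mul hs2.le,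
      show (1:ℝ)/2*(2*α) = α by ring]
  rw [hrs, hss]
  refine ⟨hmain, ?_⟩
  rw [mul_neg, mul_neg]
  linarith
end
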